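/- Let k be a field. Let S = colim_{α∈I} S_α and R = colim_{β∈J} R_β be commutative k-algebras, each presented as the colimit of a directed system, indexed by a directed preordered set, of finite-type commutative k-algebras in which all transition homomorphisms are smooth, and let φ : R → S be a k-algebra homomorphism which is strongly pro-smooth. Then for every β ∈ J there exists α₀ ∈ I such that for every α ≥ α₀ there is a smooth k-algebra homomorphism h : R_β → S_α whose composition with the canonical map S_α → S equals the composition of the canonical map R_β → R with φ. -/

import Mathlib

set_option linter.unusedSectionVars false
set_option maxHeartbeats 3000000
set_option synthInstance.maxHeartbeats 400000

open MvPolynomial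

section Cert

/-- Finite polynomial data certifying formal smoothness of `A[x]/(fc)` over `A`. -/
structure SmoothCert (A : Type) [CommRing A] (σ ι : Type) [Fintype ι]
    (fc : ι → MvPolynomial σ A) : Type where
  G : σ → MvPolynomial σ A
  a : σ → ι → MvPolynomial σ A
  b : ι → ι × ι → MvPolynomial σ A
  hG : ∀ j, G j - X j = ∑ i, a j i * fc i
  hB : ∀ i, bind₁ G (fc i) = ∑ p : ι × ι, b i p * (fc p.1 * fc p.2)

variable {A A' : Type} [CommRing A] [CommRing A'] {σ ι : Type} [Fintype ι]

/-- Transport a smoothness certificate along a ring homomorphism. -/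
noncomputable def SmoothCert.mapRingHom (φ : A →+* A') {fc : ι → MvPolynomial σ A}
    (C : SmoothCert A σ ι fc) :
    SmoothCert A' σ ι (fun i => MvPolynomial.map φ (fc i)) where
  G := fun j => MvPolynomial.map φ (C.G j)
  a := fun j i => MvPolynomial.map φ (C.a j i)
  b := fun i p => MvPolynomial.map φ (C.b i p)
  hG := fun j => by
    have := congrArg (MvPolynomial.map φ) (C.hG j)
    simpa [map_sub, map_sum] using this
  hB := fun i => by
    have := congrArg (MvPolynomial.map φ) (C.hB i)
    rw [map_bind₁] at this
    simpa [map_sum] using this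

theorem sq_span_range (fc : ι → MvPolynomial σ A) :
    Ideal.span (Set.range fc) ^ 2
      = Ideal.span (Set.range (fun p : ι × ι => fc p.1 * fc p.2)) := by
  rw [pow_two, Ideal.span_mul_span']
  congr 1
  ext x
  constructor
  · rintro ⟨a, ⟨i, rfl⟩, b, ⟨j, rfl⟩, rfl⟩
    exact ⟨(i, j), rfl⟩
  · rintro ⟨⟨i, j⟩, rfl⟩
    exact ⟨fc i, ⟨i, rfl⟩, fc j, ⟨j, rfl⟩, rfl⟩

/-- A smoothness certificate yields formal smoothness of the presented quotient algebra. -/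
theorem SmoothCert.formallySmooth {fc : ι → MvPolynomial σ A} (C : SmoothCert A σ ι fc) :
    Algebra.FormallySmooth A (MvPolynomial σ A ⧸ Ideal.span (Set.range fc)) := by
  classical
  let K : Ideal (MvPolynomial σ A) := Ideal.span (Set.range fc)
  let f : MvPolynomial σ A →ₐ[A] MvPolynomial σ A ⧸ K := Ideal.Quotient.mkₐ A K
  have hker : RingHom.ker f.toRingHom = K := by
    simp [f, Ideal.Quotient.mkₐ_eq_mk, Ideal.mk_ker]
  let K2 : Ideal (MvPolynomial σ A) := RingHom.ker f.toRingHom ^ 2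
  have hK2K : K2 = K ^ 2 := by rw [show K2 = RingHom.ker f.toRingHom ^ 2 from rfl, hker]
  let st : MvPolynomial σ A →ₐ[A] MvPolynomial σ A ⧸ K2 :=
    (Ideal.Quotient.mkₐ A K2).comp (bind₁ C.G)
  have hkill : ∀ x ∈ K, st x = 0 := by
    intro x hx
    have hle : K ≤ RingHom.ker st.toRingHom := by
      rw [show K = Ideal.span (Set.range fc) from rfl, Ideal.span_le]
      rintro _ ⟨i, rfl⟩
      have hmem : bind₁ C.G (fc i) ∈ K2 := by
        rw [hK2K, C.hB i]
        refine Ideal.sum_mem _ (fun p _ => ?_)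
        refine Ideal.mul_mem_left _ _ ?_
        rw [pow_two]
        exact Ideal.mul_mem_mul (Ideal.subset_span ⟨p.1, rfl⟩) (Ideal.subset_span ⟨p.2, rfl⟩)
      show st (fc i) ∈ (⊥ : Ideal (MvPolynomial σ A ⧸ K2))
      rw [Ideal.mem_bot]
      have : st (fc i) = Ideal.Quotient.mk K2 (bind₁ C.G (fc i)) := rfl
      rw [this, Ideal.Quotient.eq_zero_iff_mem]
      exact hmem
    exact hle hx
  let g : (MvPolynomial σ A ⧸ K) →ₐ[A] MvPolynomial σ A ⧸ K2 := Ideal.Quotient.liftₐ K st hkill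
  apply Algebra.FormallySmooth.of_split f g
  ext x
  obtain ⟨p, rfl⟩ := Ideal.Quotient.mk_surjective x
  have h1 : g (Ideal.Quotient.mk K p) = Ideal.Quotient.mk K2 (bind₁ C.G p) := rfl
  have h2 : f.kerSquareLift (Ideal.Quotient.mk K2 (bind₁ C.G p))
      = Ideal.Quotient.mk K (bind₁ C.G p) := rfl
  have h3 : Ideal.Quotient.mk K (bind₁ C.G p) = Ideal.Quotient.mk K p := by
    have hXG : (Ideal.Quotient.mkₐ A K).comp (bind₁ C.G) = Ideal.Quotient.mkₐ A K := by
      apply MvPolynomial.algHom_ext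
      intro j
      simp only [AlgHom.coe_comp, Function.comp_apply, bind₁_X_right]
      rw [Ideal.Quotient.mkₐ_eq_mk, Ideal.Quotient.eq]
      rw [C.hG j]
      exact Ideal.sum_mem _ (fun i _ => Ideal.mul_mem_left _ _ (Ideal.subset_span ⟨i, rfl⟩))
    have := DFunLike.congr_fun hXG p
    simpa using this
  simp only [AlgHom.coe_comp, Function.comp_apply, AlgHom.coe_id, id_eq]
  rw [h1, h2, h3]

/-- Extract a smoothness certificate from formal smoothness of a finitely presented algebra. -/
theorem SmoothCert.of_formallySmooth {T : Type} [CommRing T] [Algebra A T]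
    [Algebra.FormallySmooth A T]
    (gT : MvPolynomial σ A →ₐ[A] T) (hs : Function.Surjective gT)
    (fc : ι → MvPolynomial σ A)
    (hker : RingHom.ker gT.toRingHom = Ideal.span (Set.range fc)) :
    Nonempty (SmoothCert A σ ι fc) := by
  classical
  obtain ⟨s₀, hs₀⟩ := (Algebra.FormallySmooth.iff_split_surjection gT hs).mp inferInstance
  have hrep : ∀ j : σ, ∃ G : MvPolynomial σ A,
      Ideal.Quotient.mk (RingHom.ker gT.toRingHom ^ 2) G = s₀ (gT (X j)) := fun j =>
    Ideal.Quotient.mk_surjective _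
  choose G hGdef using hrep
  have hkey : s₀.comp gT
      = (Ideal.Quotient.mkₐ A (RingHom.ker gT.toRingHom ^ 2)).comp (bind₁ G) := by
    apply MvPolynomial.algHom_ext
    intro j
    simp only [AlgHom.coe_comp, Function.comp_apply, bind₁_X_right]
    rw [Ideal.Quotient.mkₐ_eq_mk, hGdef j]
  have hGj : ∀ j, G j - X j ∈ Ideal.span (Set.range fc) := by
    intro j
    rw [← hker]
    have : gT (G j) = gT (X j) := by
      have e1 : gT.kerSquareLift (Ideal.Quotient.mk _ (G j)) = gT (G j) := rfl
      rw [hGdef j] at e1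
      have e2 := DFunLike.congr_fun hs₀ (gT (X j))
      simp only [AlgHom.coe_comp, Function.comp_apply, AlgHom.coe_id, id_eq] at e2
      rw [← e1, e2]
    simpa [RingHom.mem_ker, map_sub, sub_eq_zero] using this
  have hBi : ∀ i, bind₁ G (fc i)
      ∈ Ideal.span (Set.range (fun p : ι × ι => fc p.1 * fc p.2)) := by
    intro i
    rw [← sq_span_range, ← hker]
    have hfi : gT (fc i) = 0 := by
      have : fc i ∈ RingHom.ker gT.toRingHom := by
        rw [hker]; exact Ideal.subset_span ⟨i, rfl⟩
      simpa [RingHom.mem_ker] using this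
    have := DFunLike.congr_fun hkey (fc i)
    simp only [AlgHom.coe_comp, Function.comp_apply] at this
    rw [hfi, map_zero] at this
    rw [Ideal.Quotient.mkₐ_eq_mk] at this
    exact (Ideal.Quotient.eq_zero_iff_mem).mp this.symm
  have ha : ∀ j, ∃ a : ι → MvPolynomial σ A, ∑ i, a i * fc i = G j - X j := by
    intro j
    obtain ⟨c, hc⟩ := (Submodule.mem_span_range_iff_exists_fun _).mp (hGj j)
    exact ⟨c, by simpa [smul_eq_mul] using hc⟩
  have hb : ∀ i, ∃ b : ι × ι → MvPolynomial σ A,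
      ∑ p : ι × ι, b p * (fc p.1 * fc p.2) = bind₁ G (fc i) := by
    intro i
    obtain ⟨c, hc⟩ := (Submodule.mem_span_range_iff_exists_fun _).mp (hBi i)
    exact ⟨c, by simpa [smul_eq_mul] using hc⟩
  choose a haa using ha
  choose b hbb using hb
  exact ⟨⟨G, a, b, fun j => (haa j).symm, fun i => (hbb i).symm⟩⟩

end Cert

section Sys

variable {k : Type} [Field k] {A : Type} [CommRing A] [Algebra k A]
variable {I : Type} [Preorder I] [IsDirected I (· ≤ ·)] [Nonempty I]
variable {obj : I → Type} [∀ i, CommRing (obj i)] [∀ i, Algebra k (obj i)]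
variable (trans : ∀ i j : I, i ≤ j → (obj i →ₐ[k] obj j)) (ins : ∀ i, obj i →ₐ[k] A)
variable (htrans : ∀ (i j l : I) (hij : i ≤ j) (hjl : j ≤ l),
    (trans j l hjl).comp (trans i j hij) = trans i l (le_trans hij hjl))
variable (hins : ∀ (i j : I) (hij : i ≤ j), (ins j).comp (trans i j hij) = ins i)
variable (hsurj : ∀ a : A, ∃ i x, ins i x = a)
variable (heq : ∀ (i : I) (x y : obj i), ins i x = ins i y →
    ∃ j, ∃ hij : i ≤ j, trans i j hij x = trans i j hij y)

set_option linter.unusedSectionVars false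

include htrans hins hsurj in
theorem sys_surj_fin {m : Type} [Fintype m] (a : m → A) :
    ∃ (i : I) (x : m → obj i), ∀ t, ins i (x t) = a t := by
  classical
  choose i₀ x₀ h₀ using fun t => hsurj (a t)
  obtain ⟨j, hj⟩ := Finset.exists_le (Finset.univ.image i₀)
  have hle : ∀ t, i₀ t ≤ j := fun t => hj _ (Finset.mem_image_of_mem _ (Finset.mem_univ t))
  refine ⟨j, fun t => trans _ j (hle t) (x₀ t), fun t => ?_⟩
  have := DFunLike.congr_fun (hins (i₀ t) j (hle t)) (x₀ t)
  simp only [AlgHom.coe_comp, Function.comp_apply] at this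
  rw [this, h₀]

include htrans hins heq in
theorem sys_eq_fin {m : Type} [Fintype m] (i : I) (x y : m → obj i)
    (h : ∀ t, ins i (x t) = ins i (y t)) :
    ∃ (j : I) (hij : i ≤ j), ∀ t, trans i j hij (x t) = trans i j hij (y t) := by
  classical
  choose j₀ hij₀ h₀ using fun t => heq i (x t) (y t) (h t)
  obtain ⟨j, hj⟩ := Finset.exists_le (insert i (Finset.univ.image j₀))
  have hij : i ≤ j := hj _ (Finset.mem_insert_self _ _)
  have hle : ∀ t, j₀ t ≤ j := fun t =>
    hj _ (Finset.mem_insert_of_mem (Finset.mem_image_of_mem _ (Finset.mem_univ t)))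
  refine ⟨j, hij, fun t => ?_⟩
  have e1 := DFunLike.congr_fun (htrans i (j₀ t) j (hij₀ t) (hle t)) (x t)
  have e2 := DFunLike.congr_fun (htrans i (j₀ t) j (hij₀ t) (hle t)) (y t)
  simp only [AlgHom.coe_comp, Function.comp_apply] at e1 e2
  rw [← e1, ← e2, h₀]

include htrans hins hsurj in
theorem sys_poly_surj {m : Type} [Fintype m] {σ : Type} (p : m → MvPolynomial σ A) :
    ∃ (i : I) (p' : m → MvPolynomial σ (obj i)),
      ∀ t, MvPolynomial.map (ins i).toRingHom (p' t) = p t := by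
  classical
  obtain ⟨i, c, hc⟩ := sys_surj_fin trans ins htrans hins hsurj
    (m := Σ t : m, {μ // μ ∈ (p t).support}) (fun z => coeff z.2.1 (p z.1))
  refine ⟨i, fun t => ∑ μ ∈ (p t).support.attach, monomial μ.1 (c ⟨t, μ⟩), fun t => ?_⟩
  rw [map_sum]
  conv_rhs => rw [← support_sum_monomial_coeff (p t)]
  rw [← Finset.sum_attach ((p t).support) (fun μ => monomial μ (coeff μ (p t)))]
  refine Finset.sum_congr rfl (fun μ _ => ?_)
  rw [map_monomial]
  congr 1
  exact hc ⟨t, μ⟩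

include htrans hins heq in
theorem sys_poly_eq {m : Type} [Fintype m] {σ : Type} (i : I)
    (p q : m → MvPolynomial σ (obj i))
    (h : ∀ t, MvPolynomial.map (ins i).toRingHom (p t) = MvPolynomial.map (ins i).toRingHom (q t)) :
    ∃ (j : I) (hij : i ≤ j), ∀ t,
      MvPolynomial.map (trans i j hij).toRingHom (p t)
        = MvPolynomial.map (trans i j hij).toRingHom (q t) := by
  classical
  obtain ⟨j, hij, hj⟩ := sys_eq_fin trans ins htrans hins heq
    (m := Σ t : m, {μ // μ ∈ (p t).support ∪ (q t).support})
    i (fun z => coeff z.2.1 (p z.1)) (fun z => coeff z.2.1 (q z.1))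
    (fun z => by
      have := congrArg (coeff z.2.1) (h z.1)
      simp only [coeff_map] at this; exact this)
  refine ⟨j, hij, fun t => ?_⟩
  ext μ
  simp only [coeff_map]
  by_cases hμ : μ ∈ (p t).support ∪ (q t).support
  · exact hj ⟨t, ⟨μ, hμ⟩⟩
  · simp only [Finset.mem_union, not_or, MvPolynomial.notMem_support_iff] at hμ
    rw [hμ.1, hμ.2]


include htrans hins hsurj heq in
theorem sys_factor (B : Type) [CommRing B] [Algebra k B] (hB : Algebra.FinitePresentation k B)
    (f : B →ₐ[k] A) :
    ∃ (i : I) (g : B →ₐ[k] obj i), (ins i).comp g = f := by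
  classical
  obtain ⟨ι, hι, π, hπs, hπk⟩ := Algebra.FinitePresentation.iff_quotient_mvPolynomial'.mp hB
  obtain ⟨s, hs⟩ := hπk
  obtain ⟨i, x, hx⟩ := sys_surj_fin trans ins htrans hins hsurj (m := ι) (fun v => f (π (X v)))
  set g0 : MvPolynomial ι k →ₐ[k] obj i := aeval x with hg0
  have hcomp : (ins i).comp g0 = f.comp π := by
    apply MvPolynomial.algHom_ext
    intro v
    simp [g0, hx v]
  have hrel : ∀ e : {x // x ∈ s}, ins i (g0 e.1) = ins i 0 := by
    intro e
    have he : π e.1 = 0 := by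
      have : (e : MvPolynomial ι k) ∈ RingHom.ker π.toRingHom := by
        rw [← hs]; exact Ideal.subset_span e.2
      simpa using this
    have := DFunLike.congr_fun hcomp e.1
    simp only [AlgHom.coe_comp, Function.comp_apply] at this
    rw [this, he, map_zero, map_zero]
  obtain ⟨j, hij, hj⟩ := sys_eq_fin trans ins htrans hins heq i
    (fun e : {x // x ∈ s} => g0 e.1) (fun _ => 0) hrel
  set g' : MvPolynomial ι k →ₐ[k] obj j := (trans i j hij).comp g0 with hg'
  have hker : ∀ a ∈ RingHom.ker π.toRingHom, g' a = 0 := by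
    intro a ha
    rw [← hs] at ha
    have hsle : (s : Set (MvPolynomial ι k)) ⊆ RingHom.ker g'.toRingHom := by
      intro e he
      have := hj ⟨e, he⟩
      simp only [map_zero] at this
      simpa [g', RingHom.mem_ker] using this
    have : Ideal.span (s : Set (MvPolynomial ι k)) ≤ RingHom.ker g'.toRingHom :=
      Ideal.span_le.mpr hsle
    exact this ha
  set eq := Ideal.quotientKerAlgEquivOfSurjective hπs
  set glift : (MvPolynomial ι k ⧸ RingHom.ker π.toRingHom) →ₐ[k] obj j :=
    Ideal.Quotient.liftₐ _ g' hker with hglift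
  refine ⟨j, glift.comp eq.symm.toAlgHom, ?_⟩
  ext b
  obtain ⟨p, rfl⟩ := hπs b
  have heqs : eq.symm (π p) = Ideal.Quotient.mk _ p := by
    apply eq.injective
    rw [AlgEquiv.apply_symm_apply]
    rfl
  simp only [AlgHom.coe_comp, Function.comp_apply, AlgEquiv.toAlgHom_eq_coe, AlgHom.coe_coe]
  show (ins j) (glift (eq.symm (π p))) = f (π p)
  erw [heqs]
  show (ins j) (g' p) = f (π p)
  have h1 := DFunLike.congr_fun (hins i j hij) (g0 p)
  simp only [AlgHom.coe_comp, Function.comp_apply] at h1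
  have h2 := DFunLike.congr_fun hcomp p
  simp only [AlgHom.coe_comp, Function.comp_apply] at h2
  rw [hg']
  simp only [AlgHom.coe_comp, Function.comp_apply]
  rw [h1, h2]

include htrans hins hsurj heq in
theorem sys_factor_ge (B : Type) [CommRing B] [Algebra k B]
    (hB : Algebra.FinitePresentation k B) (f : B →ₐ[k] A) (i₀ : I) :
    ∃ (i : I) (hi : i₀ ≤ i) (g : B →ₐ[k] obj i), (ins i).comp g = f := by
  obtain ⟨i, g, hg⟩ := sys_factor trans ins htrans hins hsurj heq B hB f
  obtain ⟨j, hij, hi₀j⟩ := directed_of (· ≤ ·) i i₀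
  refine ⟨j, hi₀j, (trans i j hij).comp g, ?_⟩
  rw [← AlgHom.comp_assoc, hins i j hij, hg]

include htrans hins heq in
theorem sys_hom_eq (B : Type) [CommRing B] [Algebra k B] (hB : Algebra.FiniteType k B)
    (i : I) (g₁ g₂ : B →ₐ[k] obj i) (h : (ins i).comp g₁ = (ins i).comp g₂) :
    ∃ (j : I) (hij : i ≤ j), (trans i j hij).comp g₁ = (trans i j hij).comp g₂ := by
  classical
  obtain ⟨s, hs⟩ := hB.out
  obtain ⟨j, hij, hj⟩ := sys_eq_fin trans ins htrans hins heq i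
    (fun e : {x // x ∈ s} => g₁ e.1) (fun e => g₂ e.1)
    (fun e => by
      have := DFunLike.congr_fun h e.1
      simpa using this)
  refine ⟨j, hij, ?_⟩
  have hsub : (s : Set B) ⊆ ↑(AlgHom.equalizer ((trans i j hij).comp g₁) ((trans i j hij).comp g₂)) := by
    intro e he
    exact hj ⟨e, he⟩
  have : Algebra.adjoin k (s : Set B) ≤
      AlgHom.equalizer ((trans i j hij).comp g₁) ((trans i j hij).comp g₂) :=
    Algebra.adjoin_le hsub
  rw [hs] at this
  ext b
  exact this (show b ∈ (⊤ : Subalgebra k B) from trivial)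

end Sys

section Descend

variable {k : Type} [Field k] {A : Type} [CommRing A] [Algebra k A]
variable {I : Type} [Preorder I] [IsDirected I (· ≤ ·)] [Nonempty I]
variable {obj : I → Type} [∀ i, CommRing (obj i)] [∀ i, Algebra k (obj i)]
variable (trans : ∀ i j : I, i ≤ j → (obj i →ₐ[k] obj j)) (ins : ∀ i, obj i →ₐ[k] A)
variable (htrans : ∀ (i j l : I) (hij : i ≤ j) (hjl : j ≤ l),
    (trans j l hjl).comp (trans i j hij) = trans i l (le_trans hij hjl))
variable (hins : ∀ (i j : I) (hij : i ≤ j), (ins j).comp (trans i j hij) = ins i)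
variable (hsurj : ∀ a : A, ∃ i x, ins i x = a)
variable (heq : ∀ (i : I) (x y : obj i), ins i x = ins i y →
    ∃ j, ∃ hij : i ≤ j, trans i j hij x = trans i j hij y)

include htrans in
theorem map_trans_trans {σ : Type} (i j l : I) (hij : i ≤ j) (hjl : j ≤ l)
    (p : MvPolynomial σ (obj i)) :
    MvPolynomial.map (trans j l hjl).toRingHom (MvPolynomial.map (trans i j hij).toRingHom p)
      = MvPolynomial.map (trans i l (le_trans hij hjl)).toRingHom p := by
  rw [MvPolynomial.map_map]
  congr 1
  rw [← htrans i j l hij hjl]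
  rfl

include hins in
theorem map_ins_trans {σ : Type} (i j : I) (hij : i ≤ j) (p : MvPolynomial σ (obj i)) :
    MvPolynomial.map (ins j).toRingHom (MvPolynomial.map (trans i j hij).toRingHom p)
      = MvPolynomial.map (ins i).toRingHom p := by
  rw [MvPolynomial.map_map]
  congr 1
  rw [← hins i j hij]
  rfl

include htrans hins hsurj heq in
theorem cert_descend {σ ι : Type} [Fintype σ] [Fintype ι] (c : I)
    (fc₀ : ι → MvPolynomial σ (obj c))
    (C : SmoothCert A σ ι (fun i => MvPolynomial.map (ins c).toRingHom (fc₀ i))) :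
    ∃ (d : I) (hcd : c ≤ d),
      Nonempty (SmoothCert (obj d) σ ι
        (fun i => MvPolynomial.map (trans c d hcd).toRingHom (fc₀ i))) := by
  classical
  set F : (σ ⊕ ((σ × ι) ⊕ (ι × (ι × ι)))) → MvPolynomial σ A :=
    Sum.elim C.G (Sum.elim (fun z => C.a z.1 z.2) (fun z => C.b z.1 z.2)) with hF
  obtain ⟨i₀, F', hF'⟩ := sys_poly_surj trans ins htrans hins hsurj F
  obtain ⟨d₀, hi₀d₀, hcd₀⟩ := directed_of (· ≤ ·) i₀ c
  set G₁ : σ → MvPolynomial σ (obj d₀) :=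
    fun j => MvPolynomial.map (trans i₀ d₀ hi₀d₀).toRingHom (F' (Sum.inl j)) with hG₁
  set a₁ : σ → ι → MvPolynomial σ (obj d₀) :=
    fun j i => MvPolynomial.map (trans i₀ d₀ hi₀d₀).toRingHom (F' (Sum.inr (Sum.inl (j, i)))) with ha₁
  set b₁ : ι → ι × ι → MvPolynomial σ (obj d₀) :=
    fun i p => MvPolynomial.map (trans i₀ d₀ hi₀d₀).toRingHom (F' (Sum.inr (Sum.inr (i, p)))) with hb₁
  set fc₁ : ι → MvPolynomial σ (obj d₀) :=
    fun i => MvPolynomial.map (trans c d₀ hcd₀).toRingHom (fc₀ i) with hfc₁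
  have hmG : ∀ j, MvPolynomial.map (ins d₀).toRingHom (G₁ j) = C.G j := fun j => by
    rw [hG₁]; rw [map_ins_trans trans ins hins]; exact hF' _
  have hma : ∀ j i, MvPolynomial.map (ins d₀).toRingHom (a₁ j i) = C.a j i := fun j i => by
    rw [ha₁]; rw [map_ins_trans trans ins hins]; exact hF' _
  have hmb : ∀ i p, MvPolynomial.map (ins d₀).toRingHom (b₁ i p) = C.b i p := fun i p => by
    rw [hb₁]; rw [map_ins_trans trans ins hins]; exact hF' _
  have hmfc : ∀ i, MvPolynomial.map (ins d₀).toRingHom (fc₁ i)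
      = MvPolynomial.map (ins c).toRingHom (fc₀ i) := fun i => by
    rw [hfc₁]; rw [map_ins_trans trans ins hins]
  set pfam : (σ ⊕ ι) → MvPolynomial σ (obj d₀) :=
    Sum.elim G₁ (fun i => bind₁ G₁ (fc₁ i)) with hpfam
  set qfam : (σ ⊕ ι) → MvPolynomial σ (obj d₀) :=
    Sum.elim (fun j => X j + ∑ i, a₁ j i * fc₁ i)
      (fun i => ∑ p : ι × ι, b₁ i p * (fc₁ p.1 * fc₁ p.2)) with hqfam
  have hpq : ∀ t, MvPolynomial.map (ins d₀).toRingHom (pfam t)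
      = MvPolynomial.map (ins d₀).toRingHom (qfam t) := by
    rintro (j | i)
    · simp only [hpfam, hqfam, Sum.elim_inl]
      rw [hmG]
      rw [map_add, map_sum]
      simp only [map_mul, MvPolynomial.map_X, hma, hmfc]
      have := C.hG j
      rw [sub_eq_iff_eq_add] at this
      rw [this]
      ring
    · simp only [hpfam, hqfam, Sum.elim_inr]
      rw [map_bind₁, map_sum]
      simp only [map_mul, hmb, hmfc]
      have hGfun : (fun v => MvPolynomial.map (ins d₀).toRingHom (G₁ v)) = C.G := funext hmG
      rw [hGfun, C.hB]
  obtain ⟨d, hd₀d, hd⟩ := sys_poly_eq trans ins htrans hins heq d₀ pfam qfam hpq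
  have hcd : c ≤ d := le_trans hcd₀ hd₀d
  refine ⟨d, hcd, ⟨{
    G := fun j => MvPolynomial.map (trans d₀ d hd₀d).toRingHom (G₁ j)
    a := fun j i => MvPolynomial.map (trans d₀ d hd₀d).toRingHom (a₁ j i)
    b := fun i p => MvPolynomial.map (trans d₀ d hd₀d).toRingHom (b₁ i p)
    hG := ?_
    hB := ?_ }⟩⟩
  · intro j
    have := hd (Sum.inl j)
    simp only [hpfam, hqfam, Sum.elim_inl] at this
    rw [map_add, map_sum] at this
    simp only [map_mul, MvPolynomial.map_X] at this
    rw [this]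
    have hfcc : ∀ i, MvPolynomial.map (trans d₀ d hd₀d).toRingHom (fc₁ i)
        = MvPolynomial.map (trans c d hcd).toRingHom (fc₀ i) := fun i => by
      rw [hfc₁]; exact map_trans_trans trans htrans c d₀ d hcd₀ hd₀d (fc₀ i)
    simp only [hfcc]
    ring
  · intro i
    have := hd (Sum.inr i)
    simp only [hpfam, hqfam, Sum.elim_inr] at this
    rw [map_bind₁, map_sum] at this
    simp only [map_mul] at this
    have hfcc : ∀ i, MvPolynomial.map (trans d₀ d hd₀d).toRingHom (fc₁ i)
        = MvPolynomial.map (trans c d hcd).toRingHom (fc₀ i) := fun i => by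
      rw [hfc₁]; exact map_trans_trans trans htrans c d₀ d hcd₀ hd₀d (fc₀ i)
    simp only [hfcc] at this
    rw [← this]
/-- A homomorphism of commutative rings is smooth if the target is a formally smooth
algebra of finite presentation over the source. -/
def IsSmoothHom {R S : Type} [CommRing R] [CommRing S] (f : R →+* S) : Prop :=
  @Algebra.FormallySmooth R S _ _ f.toAlgebra ∧ f.FinitePresentation

/-- A presentation of the commutative ring `A` as the colimit of a directed system of
commutative `R`-algebras (for the ring homomorphism `φ : R →+* A`). -/
structure DirectedColimitPresentation (R : Type) [CommRing R] (A : Type) [CommRing A]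
    (φ : R →+* A) : Type 1 where
  /-- The (directed, preordered) index set. -/
  I : Type
  [pre : Preorder I]
  [dir : IsDirected I (· ≤ ·)]
  [ne : Nonempty I]
  /-- The objects of the system. -/
  obj : I → Type
  [ring : ∀ i, CommRing (obj i)]
  /-- The structure homomorphisms making each object an `R`-algebra. -/
  str : ∀ i, R →+* obj i
  /-- The transition homomorphisms of the system. -/
  trans : ∀ i j : I, i ≤ j → (obj i →+* obj j)
  /-- The homomorphisms into the colimit. -/
  ins : ∀ i, obj i →+* A
  trans_refl : ∀ i, trans i i le_rfl = RingHom.id (obj i)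
  trans_comp : ∀ (i j l : I) (hij : i ≤ j) (hjl : j ≤ l),
    (trans j l hjl).comp (trans i j hij) = trans i l (le_trans hij hjl)
  str_compat : ∀ (i j : I) (hij : i ≤ j), (trans i j hij).comp (str i) = str j
  ins_compat : ∀ (i j : I) (hij : i ≤ j), (ins j).comp (trans i j hij) = ins i
  ins_str : ∀ i, (ins i).comp (str i) = φ
  jointly_surjective : ∀ a : A, ∃ i x, ins i x = a
  eventually_eq : ∀ (i : I) (x y : obj i), ins i x = ins i y →
    ∃ j, ∃ hij : i ≤ j, trans i j hij x = trans i j hij y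

/-- A witness that `φ : R →+* A` is strongly pro-smooth: a presentation of `A` as the colimit
of a directed system of smooth `R`-algebras with smooth transition homomorphisms. -/
structure ProSmoothPresentation (R : Type) [CommRing R] (A : Type) [CommRing A]
    (φ : R →+* A) extends DirectedColimitPresentation R A φ where
  str_smooth : ∀ i, IsSmoothHom (str i)
  trans_smooth : ∀ (i j : I) (hij : i ≤ j), IsSmoothHom (trans i j hij)

/-- A ring homomorphism is strongly pro-smooth if its target can be expressed as the colimit
of a directed system of smooth algebras over the source, with smooth transitions. -/
def IsStronglyProSmooth {R A : Type} [CommRing R] [CommRing A] (φ : R →+* A) : Prop :=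
  Nonempty (ProSmoothPresentation R A φ)


theorem quotPolyAlgHom_ext {k R' B : Type} [CommRing k] [CommRing R'] [Algebra k R']
    [CommRing B] [Algebra k B] {σ : Type} {K : Ideal (MvPolynomial σ R')}
    {f g : (MvPolynomial σ R' ⧸ K) →ₐ[k] B}
    (hC : ∀ r : R', f (Ideal.Quotient.mk K (MvPolynomial.C r))
        = g (Ideal.Quotient.mk K (MvPolynomial.C r)))
    (hX : ∀ j, f (Ideal.Quotient.mk K (X j)) = g (Ideal.Quotient.mk K (X j))) : f = g := by
  have h : (f.toRingHom).comp (Ideal.Quotient.mk K) = (g.toRingHom).comp (Ideal.Quotient.mk K) :=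
    MvPolynomial.ringHom_ext hC hX
  have h2 : f.toRingHom = g.toRingHom := Ideal.Quotient.ringHom_ext h
  exact AlgHom.ext fun x => RingHom.congr_fun h2 x

theorem IsSmoothHom.compHom {A B C : Type} [CommRing A] [CommRing B] [CommRing C]
    {f : A →+* B} {g : B →+* C} (hf : IsSmoothHom f) (hg : IsSmoothHom g) :
    IsSmoothHom (g.comp f) := by
  letI : Algebra A B := f.toAlgebra
  letI : Algebra B C := g.toAlgebra
  letI : Algebra A C := (g.comp f).toAlgebra
  haveI : IsScalarTower A B C := IsScalarTower.of_algebraMap_eq (fun x => rfl)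
  haveI h1 := hf.1
  haveI h2 := hg.1
  refine ⟨?_, RingHom.FinitePresentation.comp hg.2 hf.2⟩
  exact Algebra.FormallySmooth.comp A B C


theorem statement8 (k : Type) [Field k]
    (S : Type) [CommRing S] [Algebra k S] (R : Type) [CommRing R] [Algebra k R]
    -- a placid presentation `S = colim_{α ∈ I} S_α`
    (I : Type) [Preorder I] [IsDirected I (· ≤ ·)] [Nonempty I]
    (Sa : I → Type) [∀ i, CommRing (Sa i)] [∀ i, Algebra k (Sa i)]
    (tS : ∀ i j : I, i ≤ j → (Sa i →ₐ[k] Sa j)) (ιS : ∀ i, Sa i →ₐ[k] S)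
    (htS_refl : ∀ i, tS i i le_rfl = AlgHom.id k (Sa i))
    (htS_comp : ∀ (i j l : I) (hij : i ≤ j) (hjl : j ≤ l),
      (tS j l hjl).comp (tS i j hij) = tS i l (le_trans hij hjl))
    (hιS : ∀ (i j : I) (hij : i ≤ j), (ιS j).comp (tS i j hij) = ιS i)
    (hftS : ∀ i, Algebra.FiniteType k (Sa i))
    (hsmS : ∀ (i j : I) (hij : i ≤ j), IsSmoothHom (tS i j hij).toRingHom)
    (hsurjS : ∀ s : S, ∃ i x, ιS i x = s)
    (heqS : ∀ (i : I) (x y : Sa i), ιS i x = ιS i y →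
      ∃ j, ∃ hij : i ≤ j, tS i j hij x = tS i j hij y)
    -- a placid presentation `R = colim_{β ∈ J} R_β`
    (J : Type) [Preorder J] [IsDirected J (· ≤ ·)] [Nonempty J]
    (Rb : J → Type) [∀ b, CommRing (Rb b)] [∀ b, Algebra k (Rb b)]
    (tR : ∀ b c : J, b ≤ c → (Rb b →ₐ[k] Rb c)) (ιR : ∀ b, Rb b →ₐ[k] R)
    (htR_refl : ∀ b, tR b b le_rfl = AlgHom.id k (Rb b))
    (htR_comp : ∀ (b c d : J) (hbc : b ≤ c) (hcd : c ≤ d),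
      (tR c d hcd).comp (tR b c hbc) = tR b d (le_trans hbc hcd))
    (hιR : ∀ (b c : J) (hbc : b ≤ c), (ιR c).comp (tR b c hbc) = ιR b)
    (hftR : ∀ b, Algebra.FiniteType k (Rb b))
    (hsmR : ∀ (b c : J) (hbc : b ≤ c), IsSmoothHom (tR b c hbc).toRingHom)
    (hsurjR : ∀ r : R, ∃ b x, ιR b x = r)
    (heqR : ∀ (b : J) (x y : Rb b), ιR b x = ιR b y →
      ∃ c, ∃ hbc : b ≤ c, tR b c hbc x = tR b c hbc y)
    -- a strongly pro-smooth `k`-algebra homomorphism `φ : R → S`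
    (φ : R →ₐ[k] S) (hφ : IsStronglyProSmooth φ.toRingHom) :
    ∀ β : J, ∃ α₀ : I, ∀ α : I, α₀ ≤ α →
      ∃ h : Rb β →ₐ[k] Sa α, IsSmoothHom h.toRingHom ∧
        (ιS α).comp h = φ.comp (ιR β) := by
  intro β
  classical
  obtain ⟨P⟩ := hφ
  letI : Preorder P.I := P.pre
  letI : IsDirected P.I (· ≤ ·) := P.dir
  letI : Nonempty P.I := P.ne
  letI : ∀ γ, CommRing (P.obj γ) := P.ring
  letI algT : ∀ γ, Algebra k (P.obj γ) := fun γ => ((P.str γ).comp (algebraMap k R)).toAlgebra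
  -- fp instances
  have hfpRb : ∀ b, Algebra.FinitePresentation k (Rb b) := fun b =>
    Algebra.FinitePresentation.of_finiteType.mp (hftR b)
  have hfpSa : ∀ i, Algebra.FinitePresentation k (Sa i) := fun i =>
    Algebra.FinitePresentation.of_finiteType.mp (hftS i)
  -- the T system as k-algebras
  let tT : ∀ γ δ : P.I, γ ≤ δ → (P.obj γ →ₐ[k] P.obj δ) := fun γ δ h =>
    { toRingHom := P.trans γ δ h
      commutes' := fun r => RingHom.congr_fun (P.str_compat γ δ h) (algebraMap k R r) }
  let ιT : ∀ γ, P.obj γ →ₐ[k] S := fun γ =>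
    { toRingHom := P.ins γ
      commutes' := fun r => by
        have h1 := RingHom.congr_fun (P.ins_str γ) (algebraMap k R r)
        have h2 : φ (algebraMap k R r) = algebraMap k S r := φ.commutes r
        exact h1.trans h2 }
  let strTa : ∀ γ, R →ₐ[k] P.obj γ := fun γ =>
    { toRingHom := P.str γ
      commutes' := fun r => rfl }
  have htT : ∀ (γ δ ε : P.I) (h1 : γ ≤ δ) (h2 : δ ≤ ε),
      (tT δ ε h2).comp (tT γ δ h1) = tT γ ε (le_trans h1 h2) := fun γ δ ε h1 h2 =>
    AlgHom.ext fun x => RingHom.congr_fun (P.trans_comp γ δ ε h1 h2) x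
  have hιT : ∀ (γ δ : P.I) (h : γ ≤ δ), (ιT δ).comp (tT γ δ h) = ιT γ := fun γ δ h =>
    AlgHom.ext fun x => RingHom.congr_fun (P.ins_compat γ δ h) x
  have hsurjT : ∀ x : S, ∃ γ y, ιT γ y = x := fun x => P.jointly_surjective x
  have heqT : ∀ (γ : P.I) (x y : P.obj γ), ιT γ x = ιT γ y →
      ∃ δ, ∃ h : γ ≤ δ, tT γ δ h x = tT γ δ h y := fun γ x y h => P.eventually_eq γ x y h
  have hstrT : ∀ (γ δ : P.I) (h : γ ≤ δ), (tT γ δ h).comp (strTa γ) = strTa δ := fun γ δ h =>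
    AlgHom.ext fun x => RingHom.congr_fun (P.str_compat γ δ h) x
  have hinsstrT : ∀ (γ : P.I) (x : R), ιT γ (strTa γ x) = φ x := fun γ x =>
    RingHom.congr_fun (P.ins_str γ) x
  -- Step 1: factor ψ = φ ∘ ιR β through the S-system
  obtain ⟨α₁, h₁, hh₁⟩ := sys_factor tS ιS htS_comp hιS hsurjS heqS (Rb β) (hfpRb β)
    (φ.comp (ιR β))
  -- Step 2: factor ιS α₁ through the T-system
  obtain ⟨δ₀, q₀, hq₀⟩ := sys_factor tT ιT htT hιT hsurjT heqT (Sa α₁) (hfpSa α₁) (ιS α₁)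
  -- Step 3: align the two maps Rb β → T δ₀
  obtain ⟨δ₁, hδ₀₁, heq₁⟩ := sys_hom_eq tT ιT htT hιT heqT (Rb β) (hftR β) δ₀
    (q₀.comp h₁) ((strTa δ₀).comp (ιR β))
    (by
      ext x
      simp only [AlgHom.coe_comp, Function.comp_apply]
      have e1 := DFunLike.congr_fun hq₀ (h₁ x)
      simp only [AlgHom.coe_comp, Function.comp_apply] at e1
      have e2 := DFunLike.congr_fun hh₁ x
      simp only [AlgHom.coe_comp, Function.comp_apply] at e2
      rw [e1, e2, hinsstrT])
  set q₁ : Sa α₁ →ₐ[k] P.obj δ₁ := (tT δ₀ δ₁ hδ₀₁).comp q₀ with hq₁def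
  have hq₁ins : (ιT δ₁).comp q₁ = ιS α₁ := by
    rw [hq₁def, ← AlgHom.comp_assoc, hιT, hq₀]
  have hq₁h₁ : q₁.comp h₁ = (strTa δ₁).comp (ιR β) := by
    rw [hq₁def, AlgHom.comp_assoc, heq₁, ← AlgHom.comp_assoc, hstrT]
  -- Step 4: a finite presentation of T δ₁ over R, with a smoothness certificate
  letI : Algebra R (P.obj δ₁) := (P.str δ₁).toAlgebra
  haveI hTfs : Algebra.FormallySmooth R (P.obj δ₁) := (P.str_smooth δ₁).1
  have hTfp : Algebra.FinitePresentation R (P.obj δ₁) := (P.str_smooth δ₁).2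
  obtain ⟨ν, hνI, gT, hgTs, hgTk⟩ :=
    Algebra.FinitePresentation.iff_quotient_mvPolynomial'.mp hTfp
  haveI : Fintype ν := hνI
  obtain ⟨sgen, hsk⟩ := hgTk
  let ι' : Type := {x : MvPolynomial ν R // x ∈ sgen}
  let fc : ι' → MvPolynomial ν R := fun x => x.1
  have hker : RingHom.ker gT.toRingHom = Ideal.span (Set.range fc) := by
    rw [← hsk]
    congr 1
    exact Subtype.range_coe.symm
  obtain ⟨C0⟩ := SmoothCert.of_formallySmooth gT hgTs fc hker
  -- Step 5: descend the certificate along the R-system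
  obtain ⟨c₀', fc₀', hfc₀'⟩ := sys_poly_surj tR ιR htR_comp hιR hsurjR (m := ι') (σ := ν) fc
  have hCeq : (fun i => MvPolynomial.map (ιR c₀').toRingHom (fc₀' i)) = fc := funext hfc₀'
  obtain ⟨c₁, hc₀c₁, ⟨C2⟩⟩ := cert_descend tR ιR htR_comp hιR hsurjR heqR c₀' fc₀'
    (hCeq ▸ C0)
  -- work from now on over the base stage c₁
  let fc₁ : ι' → MvPolynomial ν (Rb c₁) := fun i =>
    MvPolynomial.map (tR c₀' c₁ hc₀c₁).toRingHom (fc₀' i)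
  have hfc₁ : ∀ i, MvPolynomial.map (ιR c₁).toRingHom (fc₁ i) = fc i := fun i => by
    show MvPolynomial.map (ιR c₁).toRingHom
      (MvPolynomial.map (tR c₀' c₁ hc₀c₁).toRingHom (fc₀' i)) = fc i
    rw [map_ins_trans tR ιR hιR]
    exact hfc₀' i
  -- Step 6: the W-system of finite-stage models of T δ₁
  let D : Type := {x : J // c₁ ≤ x}
  haveI : IsDirected D (· ≤ ·) := ⟨fun a b => by
    obtain ⟨u, hau, hbu⟩ := directed_of (· ≤ ·) a.1 b.1
    exact ⟨⟨u, le_trans a.2 hau⟩, hau, hbu⟩⟩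
  haveI : Nonempty D := ⟨⟨c₁, le_rfl⟩⟩
  let fcD : ∀ d : D, ι' → MvPolynomial ν (Rb d.1) := fun d i =>
    MvPolynomial.map (tR c₁ d.1 d.2).toRingHom (fc₁ i)
  let KD : ∀ d : D, Ideal (MvPolynomial ν (Rb d.1)) := fun d => Ideal.span (Set.range (fcD d))
  let objW : D → Type := fun d => MvPolynomial ν (Rb d.1) ⧸ KD d
  haveI : IsScalarTower k R (P.obj δ₁) := IsScalarTower.of_algebraMap_eq (fun r => rfl)
  let gTk : MvPolynomial ν R →ₐ[k] P.obj δ₁ := gT.restrictScalars k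
  let ΦW : ∀ d : D, MvPolynomial ν (Rb d.1) →ₐ[k] P.obj δ₁ := fun d =>
    gTk.comp (MvPolynomial.mapAlgHom (ιR d.1))
  have hΦW : ∀ (d : D) (p), ΦW d p = gT (MvPolynomial.map (ιR d.1).toRingHom p) :=
    fun d p => rfl
  have hfcDmem : ∀ (d : D) (i), MvPolynomial.map (ιR d.1).toRingHom (fcD d i) = fc i :=
    fun d i => by
      show MvPolynomial.map (ιR d.1).toRingHom
        (MvPolynomial.map (tR c₁ d.1 d.2).toRingHom (fc₁ i)) = fc i
      rw [map_ins_trans tR ιR hιR]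
      exact hfc₁ i
  have hgTfc : ∀ i : ι', gT (fc i) = 0 := fun i => by
    have : fc i ∈ RingHom.ker gT.toRingHom := by rw [hker]; exact Ideal.subset_span ⟨i, rfl⟩
    simpa [RingHom.mem_ker] using this
  have hkillW : ∀ (d : D), ∀ x ∈ KD d, ΦW d x = 0 := by
    intro d x hx
    have hle : KD d ≤ RingHom.ker (ΦW d).toRingHom := by
      rw [show KD d = Ideal.span (Set.range (fcD d)) from rfl, Ideal.span_le]
      rintro _ ⟨i, rfl⟩
      have hz : ΦW d (fcD d i) = 0 := by rw [hΦW, hfcDmem, hgTfc]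
      simpa [SetLike.mem_coe, RingHom.mem_ker] using hz
    exact hle hx
  let insW : ∀ d : D, objW d →ₐ[k] P.obj δ₁ := fun d =>
    Ideal.Quotient.liftₐ (KD d) (ΦW d) (hkillW d)
  have hinsWmk : ∀ (d : D) (p), insW d (Ideal.Quotient.mk (KD d) p)
      = gT (MvPolynomial.map (ιR d.1).toRingHom p) := fun d p => rfl
  have hmapfcD : ∀ (d e : D) (h : d ≤ e) (i),
      MvPolynomial.map (tR d.1 e.1 h).toRingHom (fcD d i) = fcD e i := by
    intro d e h i
    show MvPolynomial.map (tR d.1 e.1 h).toRingHom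
      (MvPolynomial.map (tR c₁ d.1 d.2).toRingHom (fc₁ i)) = fcD e i
    rw [map_trans_trans tR htR_comp]
  have hkillW2 : ∀ (d e : D) (h : d ≤ e), ∀ x ∈ KD d,
      ((Ideal.Quotient.mkₐ k (KD e)).comp
        (MvPolynomial.mapAlgHom (tR d.1 e.1 h))) x = 0 := by
    intro d e h x hx
    have hle : KD d ≤ RingHom.ker ((Ideal.Quotient.mkₐ k (KD e)).comp
        (MvPolynomial.mapAlgHom (tR d.1 e.1 h))).toRingHom := by
      rw [show KD d = Ideal.span (Set.range (fcD d)) from rfl, Ideal.span_le]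
      rintro _ ⟨i, rfl⟩
      have hz : ((Ideal.Quotient.mkₐ k (KD e)).comp
          (MvPolynomial.mapAlgHom (tR d.1 e.1 h))) (fcD d i) = 0 := by
        show Ideal.Quotient.mk (KD e) (MvPolynomial.map (tR d.1 e.1 h).toRingHom (fcD d i)) = 0
        rw [hmapfcD d e h i]
        exact Ideal.Quotient.eq_zero_iff_mem.mpr (Ideal.subset_span ⟨i, rfl⟩)
      simpa [SetLike.mem_coe, RingHom.mem_ker] using hz
    exact hle hx
  let transW : ∀ d e : D, d ≤ e → (objW d →ₐ[k] objW e) := fun d e h =>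
    Ideal.Quotient.liftₐ (KD d) ((Ideal.Quotient.mkₐ k (KD e)).comp
      (MvPolynomial.mapAlgHom (tR d.1 e.1 h))) (hkillW2 d e h)
  have htransWmk : ∀ (d e : D) (h : d ≤ e) (p), transW d e h (Ideal.Quotient.mk (KD d) p)
      = Ideal.Quotient.mk (KD e) (MvPolynomial.map (tR d.1 e.1 h).toRingHom p) :=
    fun d e h p => rfl
  have htransW : ∀ (d e f' : D) (hde : d ≤ e) (hef : e ≤ f'),
      (transW e f' hef).comp (transW d e hde) = transW d f' (le_trans hde hef) := by
    intro d e f' hde hef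
    apply quotPolyAlgHom_ext
    · intro r
      simp only [AlgHom.coe_comp, Function.comp_apply]
      rw [htransWmk, MvPolynomial.map_C, htransWmk, MvPolynomial.map_C, htransWmk,
        MvPolynomial.map_C]
      have h0 := DFunLike.congr_fun (htR_comp d.1 e.1 f'.1 hde hef) r
      simp only [AlgHom.coe_comp, Function.comp_apply] at h0
      have h2 : (tR e.1 f'.1 hef).toRingHom ((tR d.1 e.1 hde).toRingHom r)
          = (tR d.1 f'.1 (le_trans hde hef)).toRingHom r := h0
      rw [h2]
    · intro j
      simp only [AlgHom.coe_comp, Function.comp_apply]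
      rw [htransWmk, MvPolynomial.map_X, htransWmk, MvPolynomial.map_X, htransWmk,
        MvPolynomial.map_X]
  have hinsWcompat : ∀ (d e : D) (h : d ≤ e), (insW e).comp (transW d e h) = insW d := by
    intro d e h
    apply quotPolyAlgHom_ext
    · intro r
      simp only [AlgHom.coe_comp, Function.comp_apply]
      rw [htransWmk, MvPolynomial.map_C, hinsWmk, MvPolynomial.map_C, hinsWmk,
        MvPolynomial.map_C]
      have h0 := DFunLike.congr_fun (hιR d.1 e.1 h) r
      simp only [AlgHom.coe_comp, Function.comp_apply] at h0
      have h2 : (ιR e.1).toRingHom ((tR d.1 e.1 h).toRingHom r) = (ιR d.1).toRingHom r := h0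
      rw [h2]
    · intro j
      simp only [AlgHom.coe_comp, Function.comp_apply]
      rw [htransWmk, MvPolynomial.map_X, hinsWmk, MvPolynomial.map_X, hinsWmk,
        MvPolynomial.map_X]
  have hsurjW : ∀ t : P.obj δ₁, ∃ (d : D) (x : objW d), insW d x = t := by
    intro t
    obtain ⟨p, rfl⟩ := hgTs t
    obtain ⟨d₁', p', hp'⟩ := sys_poly_surj tR ιR htR_comp hιR hsurjR
      (m := PUnit) (σ := ν) (fun _ => p)
    obtain ⟨u, hu1, hu2⟩ := directed_of (· ≤ ·) d₁' c₁
    refine ⟨⟨u, hu2⟩, Ideal.Quotient.mk _ (MvPolynomial.map (tR d₁' u hu1).toRingHom (p' PUnit.unit)), ?_⟩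
    rw [hinsWmk]
    rw [map_ins_trans tR ιR hιR]
    rw [hp' PUnit.unit]
  have heqW : ∀ (d : D) (x y : objW d), insW d x = insW d y →
      ∃ e, ∃ h : d ≤ e, transW d e h x = transW d e h y := by
    intro d x y hxy
    obtain ⟨p, rfl⟩ := Ideal.Quotient.mk_surjective x
    obtain ⟨q, rfl⟩ := Ideal.Quotient.mk_surjective y
    rw [hinsWmk, hinsWmk] at hxy
    have hmem : MvPolynomial.map (ιR d.1).toRingHom (p - q) ∈ Ideal.span (Set.range fc) := by
      rw [← hker]
      have : gT (MvPolynomial.map (ιR d.1).toRingHom (p - q)) = 0 := by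
        rw [map_sub, map_sub, hxy, sub_self]
      simpa [RingHom.mem_ker] using this
    obtain ⟨u, hu⟩ := (Submodule.mem_span_range_iff_exists_fun _).mp hmem
    obtain ⟨d₁', u', hu'⟩ := sys_poly_surj tR ιR htR_comp hιR hsurjR (m := ι') (σ := ν) u
    obtain ⟨d₂, hd2a, hd2b⟩ := directed_of (· ≤ ·) d.1 d₁'
    have hd₂c : c₁ ≤ d₂ := le_trans d.2 hd2a
    have hpq : MvPolynomial.map (ιR d₂).toRingHom
          (MvPolynomial.map (tR d.1 d₂ hd2a).toRingHom (p - q))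
        = MvPolynomial.map (ιR d₂).toRingHom
          (∑ i : ι', (MvPolynomial.map (tR d₁' d₂ hd2b).toRingHom (u' i))
            * (fcD ⟨d₂, hd₂c⟩ i)) := by
      rw [map_ins_trans tR ιR hιR, map_sum]
      simp only [map_mul]
      have h1 : ∀ i : ι', MvPolynomial.map (ιR d₂).toRingHom
          (MvPolynomial.map (tR d₁' d₂ hd2b).toRingHom (u' i)) = u i := fun i => by
        rw [map_ins_trans tR ιR hιR]; exact hu' i
      have h2 : ∀ i : ι', MvPolynomial.map (ιR d₂).toRingHom (fcD ⟨d₂, hd₂c⟩ i) = fc i :=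
        fun i => hfcDmem ⟨d₂, hd₂c⟩ i
      simp only [h1, h2]
      rw [← hu]
      simp [smul_eq_mul]
    obtain ⟨d₃', hd₂₃, hid⟩ := sys_poly_eq tR ιR htR_comp hιR heqR (m := PUnit) (σ := ν) d₂
      (fun _ => MvPolynomial.map (tR d.1 d₂ hd2a).toRingHom (p - q))
      (fun _ => ∑ i : ι', (MvPolynomial.map (tR d₁' d₂ hd2b).toRingHom (u' i))
        * (fcD ⟨d₂, hd₂c⟩ i))
      (fun _ => hpq)
    have hid' := hid PUnit.unit
    let e : D := ⟨d₃', le_trans hd₂c hd₂₃⟩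
    have hde : d ≤ e := Subtype.coe_le_coe.mp (le_trans hd2a hd₂₃)
    refine ⟨e, hde, ?_⟩
    rw [htransWmk, htransWmk]
    rw [Ideal.Quotient.eq]
    have : MvPolynomial.map (tR d.1 e.1 hde).toRingHom (p - q) ∈ KD e := by
      have e1 : MvPolynomial.map (tR d.1 e.1 hde).toRingHom (p - q)
          = MvPolynomial.map (tR d₂ d₃' hd₂₃).toRingHom
            (MvPolynomial.map (tR d.1 d₂ hd2a).toRingHom (p - q)) := by
        rw [map_trans_trans tR htR_comp]
      rw [e1, hid', map_sum]
      refine Ideal.sum_mem _ (fun i _ => ?_)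
      rw [map_mul]
      refine Ideal.mul_mem_left _ _ ?_
      rw [show MvPolynomial.map (tR d₂ d₃' hd₂₃).toRingHom (fcD ⟨d₂, hd₂c⟩ i) = fcD e i from
        hmapfcD ⟨d₂, hd₂c⟩ e hd₂₃ i]
      exact Ideal.subset_span ⟨i, rfl⟩
    simpa [map_sub] using this
  -- the structure maps of the W-system
  let strW : ∀ d : D, Rb d.1 →ₐ[k] objW d := fun d =>
    (Ideal.Quotient.mkₐ k (KD d)).comp
      (IsScalarTower.toAlgHom k (Rb d.1) (MvPolynomial ν (Rb d.1)))
  have hstrWmk : ∀ (d : D) (r), strW d r = Ideal.Quotient.mk (KD d) (MvPolynomial.C r) :=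
    fun d r => by
      show Ideal.Quotient.mk (KD d) (algebraMap (Rb d.1) (MvPolynomial ν (Rb d.1)) r) = _
      rw [MvPolynomial.algebraMap_eq]
  have hinsWstr : ∀ (d : D) (r), insW d (strW d r) = P.str δ₁ (ιR d.1 r) := fun d r => by
    rw [hstrWmk, hinsWmk, MvPolynomial.map_C]
    exact gT.commutes ((ιR d.1) r)
  have htransWstr : ∀ (d e : D) (h : d ≤ e) (r),
      transW d e h (strW d r) = strW e (tR d.1 e.1 h r) := fun d e h r => by
    rw [hstrWmk, htransWmk, MvPolynomial.map_C, hstrWmk]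
    rfl
  -- Step 7: factor q₁ through the W-system at a stage above β
  obtain ⟨e₀', hce₀, hβe₀⟩ := directed_of (· ≤ ·) c₁ β
  obtain ⟨d₂, hd₂ge, q₂, hq₂⟩ := sys_factor_ge transW insW htransW hinsWcompat hsurjW heqW
    (Sa α₁) (hfpSa α₁) q₁ ⟨e₀', hce₀⟩
  have hβd₂ : β ≤ d₂.1 := le_trans hβe₀ (Subtype.coe_le_coe.mpr hd₂ge)
  -- Step 8: align q₂ ∘ h₁ with the structure map
  obtain ⟨d₃, hd₂₃, heq₂⟩ := sys_hom_eq transW insW htransW hinsWcompat heqW (Rb β) (hftR β) d₂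
    (q₂.comp h₁) ((strW d₂).comp (tR β d₂.1 hβd₂))
    (by
      ext x
      simp only [AlgHom.coe_comp, Function.comp_apply]
      have e1 := DFunLike.congr_fun hq₂ (h₁ x)
      simp only [AlgHom.coe_comp, Function.comp_apply] at e1
      have e2 := DFunLike.congr_fun hq₁h₁ x
      simp only [AlgHom.coe_comp, Function.comp_apply] at e2
      rw [e1, e2, hinsWstr]
      have e3 := DFunLike.congr_fun (hιR β d₂.1 hβd₂) x
      simp only [AlgHom.coe_comp, Function.comp_apply] at e3
      rw [e3]
      rfl)
  set q₃ : Sa α₁ →ₐ[k] objW d₃ := (transW d₂ d₃ hd₂₃).comp q₂ with hq₃def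
  have hβd₃ : β ≤ d₃.1 := le_trans hβd₂ (Subtype.coe_le_coe.mpr hd₂₃)
  have hq₃ins : (insW d₃).comp q₃ = q₁ := by
    rw [hq₃def, ← AlgHom.comp_assoc, hinsWcompat, hq₂]
  have hq₃h₁ : q₃.comp h₁ = (strW d₃).comp (tR β d₃.1 hβd₃) := by
    rw [hq₃def, AlgHom.comp_assoc, heq₂]
    ext x
    simp only [AlgHom.coe_comp, Function.comp_apply]
    rw [htransWstr]
    congr 1
    have e4 := DFunLike.congr_fun (htR_comp β d₂.1 d₃.1 hβd₂ hd₂₃) x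
    simp only [AlgHom.coe_comp, Function.comp_apply] at e4
    exact e4
  -- Step 9: factor the map W → S through the S-system at a stage above α₁
  have fgKD : (KD d₃).FG := Submodule.fg_span (Set.finite_range (fcD d₃))
  haveI fpPoly : Algebra.FinitePresentation (Rb d₃.1) (MvPolynomial ν (Rb d₃.1)) :=
    inferInstance
  haveI fpQuot : Algebra.FinitePresentation (Rb d₃.1) (objW d₃) :=
    Algebra.FinitePresentation.quotient fgKD
  haveI fpW : Algebra.FinitePresentation k (objW d₃) :=
    Algebra.FinitePresentation.trans k (Rb d₃.1) (objW d₃)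
  set ω : objW d₃ →ₐ[k] S := (ιT δ₁).comp (insW d₃) with hωdef
  obtain ⟨α₂, hα₁₂, v, hv⟩ := sys_factor_ge tS ιS htS_comp hιS hsurjS heqS
    (objW d₃) fpW ω α₁
  -- Step 10: align v ∘ q₃ with the transition map
  obtain ⟨α₃, hα₂₃, heq₃⟩ := sys_hom_eq tS ιS htS_comp hιS heqS (Sa α₁) (hftS α₁) α₂
    (v.comp q₃) (tS α₁ α₂ hα₁₂)
    (by
      rw [← AlgHom.comp_assoc, hv, hιS, hωdef, AlgHom.comp_assoc, hq₃ins, hq₁ins])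
  have hα₁₃ : α₁ ≤ α₃ := le_trans hα₁₂ hα₂₃
  set v' : objW d₃ →ₐ[k] Sa α₃ := (tS α₂ α₃ hα₂₃).comp v with hv'def
  have hv'q₃ : v'.comp q₃ = tS α₁ α₃ hα₁₃ := by
    rw [hv'def, AlgHom.comp_assoc, heq₃, htS_comp]
  have hv'S : (ιS α₃).comp v' = ω := by
    rw [hv'def, ← AlgHom.comp_assoc, hιS, hv]
  set h₀ : Rb β →ₐ[k] Sa α₃ := (tS α₁ α₃ hα₁₃).comp h₁ with hh₀def
  have hh₀ : (ιS α₃).comp h₀ = φ.comp (ιR β) := by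
    rw [hh₀def, ← AlgHom.comp_assoc, hιS, hh₁]
  -- Step 11: h₀ is smooth
  letI algβ3 : Algebra (Rb β) (Sa α₃) := h₀.toRingHom.toAlgebra
  haveI : IsScalarTower k (Rb β) (Sa α₃) :=
    IsScalarTower.of_algebraMap_eq (fun r => (h₀.commutes r).symm)
  haveI smW : Algebra.FormallySmooth (Rb d₃.1) (objW d₃) :=
    (C2.mapRingHom (tR c₁ d₃.1 d₃.2).toRingHom).formallySmooth
  letI algβd₃ : Algebra (Rb β) (Rb d₃.1) := (tR β d₃.1 hβd₃).toRingHom.toAlgebra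
  haveI smRβd₃ : Algebra.FormallySmooth (Rb β) (Rb d₃.1) := (hsmR β d₃.1 hβd₃).1
  letI algβW : Algebra (Rb β) (objW d₃) :=
    ((algebraMap (Rb d₃.1) (objW d₃)).comp (tR β d₃.1 hβd₃).toRingHom).toAlgebra
  haveI smβW : Algebra.FormallySmooth (Rb β) (objW d₃) :=
    @Algebra.FormallySmooth.comp (Rb β) _ (Rb d₃.1) _ algβd₃ (objW d₃) _ algβW _
      (IsScalarTower.of_algebraMap_eq (fun r => rfl)) smRβd₃ smW
  have halgβW : ∀ r, algebraMap (Rb β) (objW d₃) r = strW d₃ (tR β d₃.1 hβd₃ r) := fun r => by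
    rw [hstrWmk]
    rfl
  -- a presentation of Sa α₃ over Rb β
  obtain ⟨n₃, gk, hgks⟩ := Algebra.FiniteType.iff_quotient_mvPolynomial''.mp (hftS α₃)
  set y : Fin n₃ → Sa α₃ := fun j => gk (MvPolynomial.X j) with hydef
  set gP : MvPolynomial (Fin n₃) (Rb β) →ₐ[Rb β] Sa α₃ := MvPolynomial.aeval y with hgPdef
  have hgPs : Function.Surjective gP := by
    intro x
    obtain ⟨q, rfl⟩ := hgks x
    refine ⟨MvPolynomial.map (algebraMap k (Rb β)) q, ?_⟩
    have h1 : gP (MvPolynomial.map (algebraMap k (Rb β)) q) = MvPolynomial.aeval y q :=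
      MvPolynomial.aeval_map_algebraMap (Rb β) y q
    rw [h1]
    have h2 : (MvPolynomial.aeval y : MvPolynomial (Fin n₃) k →ₐ[k] Sa α₃) = gk :=
      MvPolynomial.algHom_ext (fun j => by rw [MvPolynomial.aeval_X])
    exact DFunLike.congr_fun h2 q
  set π₂ : (MvPolynomial (Fin n₃) (Rb β) ⧸ (RingHom.ker gP.toRingHom ^ 2)) →ₐ[Rb β] Sa α₃ :=
    gP.kerSquareLift with hπ₂def
  have hπ₂mk : ∀ p, π₂ (Ideal.Quotient.mk _ p) = gP p := fun p => rfl
  have hπ₂s : Function.Surjective π₂ := by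
    intro x
    obtain ⟨p, hp⟩ := hgPs x
    exact ⟨Ideal.Quotient.mk _ p, hp⟩
  have hnil : IsNilpotent (RingHom.ker π₂.toRingHom) :=
    ⟨2, by rw [AlgHom.ker_kerSquareLift]; exact Ideal.cotangentIdeal_square _⟩
  set v'' : objW d₃ →ₐ[Rb β] Sa α₃ :=
    { toRingHom := v'.toRingHom
      commutes' := fun r => by
        show v' (algebraMap (Rb β) (objW d₃) r) = algebraMap (Rb β) (Sa α₃) r
        rw [halgβW]
        have e1 := DFunLike.congr_fun hq₃h₁ r
        simp only [AlgHom.coe_comp, Function.comp_apply] at e1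
        rw [← e1]
        have e2 := DFunLike.congr_fun hv'q₃ (h₁ r)
        simp only [AlgHom.coe_comp, Function.comp_apply] at e2
        rw [e2]
        rfl } with hv''def
  set vL : objW d₃ →ₐ[Rb β] (MvPolynomial (Fin n₃) (Rb β) ⧸ (RingHom.ker gP.toRingHom ^ 2)) :=
    Algebra.FormallySmooth.liftOfSurjective v'' π₂ hπ₂s hnil with hvLdef
  have hvL : π₂.comp vL = v'' := Algebra.FormallySmooth.comp_liftOfSurjective v'' π₂ hπ₂s hnil
  letI algS1Q : Algebra (Sa α₁) (MvPolynomial (Fin n₃) (Rb β) ⧸ (RingHom.ker gP.toRingHom ^ 2)) :=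
    (vL.toRingHom.comp q₃.toRingHom).toAlgebra
  letI algS13 : Algebra (Sa α₁) (Sa α₃) := (tS α₁ α₃ hα₁₃).toRingHom.toAlgebra
  haveI smS13 : Algebra.FormallySmooth (Sa α₁) (Sa α₃) := (hsmS α₁ α₃ hα₁₃).1
  set π₃ : (MvPolynomial (Fin n₃) (Rb β) ⧸ (RingHom.ker gP.toRingHom ^ 2)) →ₐ[Sa α₁] Sa α₃ :=
    { toRingHom := π₂.toRingHom
      commutes' := fun x => by
        show π₂ (vL (q₃ x)) = tS α₁ α₃ hα₁₃ x
        have e1 := DFunLike.congr_fun hvL (q₃ x)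
        simp only [AlgHom.coe_comp, Function.comp_apply] at e1
        rw [e1]
        show v' (q₃ x) = _
        have e2 := DFunLike.congr_fun hv'q₃ x
        simp only [AlgHom.coe_comp, Function.comp_apply] at e2
        exact e2 } with hπ₃def
  have hπ₃s : Function.Surjective π₃ := hπ₂s
  have hnil₃ : IsNilpotent (RingHom.ker π₃.toRingHom) := hnil
  set σA : Sa α₃ →ₐ[Sa α₁] (MvPolynomial (Fin n₃) (Rb β) ⧸ (RingHom.ker gP.toRingHom ^ 2)) :=
    Algebra.FormallySmooth.liftOfSurjective (AlgHom.id (Sa α₁) (Sa α₃)) π₃ hπ₃s hnil₃ with hσAdef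
  have hσA : π₃.comp σA = AlgHom.id (Sa α₁) (Sa α₃) :=
    Algebra.FormallySmooth.comp_liftOfSurjective (AlgHom.id (Sa α₁) (Sa α₃)) π₃ hπ₃s hnil₃
  set σ' : Sa α₃ →ₐ[Rb β] (MvPolynomial (Fin n₃) (Rb β) ⧸ (RingHom.ker gP.toRingHom ^ 2)) :=
    { toRingHom := σA.toRingHom
      commutes' := fun r => by
        show σA (algebraMap (Rb β) (Sa α₃) r) = algebraMap (Rb β) _ r
        have e1 : algebraMap (Rb β) (Sa α₃) r = tS α₁ α₃ hα₁₃ (h₁ r) := rfl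
        rw [e1]
        have e2 : σA (tS α₁ α₃ hα₁₃ (h₁ r))
            = algebraMap (Sa α₁)
              (MvPolynomial (Fin n₃) (Rb β) ⧸ (RingHom.ker gP.toRingHom ^ 2)) (h₁ r) :=
          σA.commutes (h₁ r)
        rw [e2]
        show vL (q₃ (h₁ r)) = _
        have e3 := DFunLike.congr_fun hq₃h₁ r
        simp only [AlgHom.coe_comp, Function.comp_apply] at e3
        rw [e3, ← halgβW]
        exact vL.commutes r } with hσ'def
  haveI smfinal : Algebra.FormallySmooth (Rb β) (Sa α₃) := by
    apply Algebra.FormallySmooth.of_split gP σ'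
    ext x
    show gP.kerSquareLift (σA x) = x
    exact DFunLike.congr_fun hσA x
  haveI fpk3 : Algebra.FinitePresentation k (Sa α₃) := hfpSa α₃
  haveI ftkβ : Algebra.FiniteType k (Rb β) := hftR β
  have fpβ3 : Algebra.FinitePresentation (Rb β) (Sa α₃) :=
    Algebra.FinitePresentation.of_restrict_scalars_finitePresentation k (Rb β) (Sa α₃)
  have hsm₀ : IsSmoothHom h₀.toRingHom := ⟨smfinal, fpβ3⟩
  -- conclusion
  refine ⟨α₃, fun α hα => ⟨(tS α₃ α hα).comp h₀, ?_, ?_⟩⟩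
  · have hcomp : ((tS α₃ α hα).comp h₀).toRingHom
        = (tS α₃ α hα).toRingHom.comp h₀.toRingHom := rfl
    rw [hcomp]
    exact IsSmoothHom.compHom hsm₀ (hsmS α₃ α hα)
  · rw [← AlgHom.comp_assoc, hιS, hh₀]
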